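/- Let A, B, ε > 0 and C ≥ 0, and define K : (0, ∞) → ℝ by K(s) := [ ((A·s² + B) + √((A·s² + B)² + 4·ε²·C·s²)) / (2·ε²·s) ]². Then K is strictly decreasing on (0, √(B/A)], strictly increasing on [√(B/A), ∞), and attains its minimum over (0, ∞) uniquely at s* = √(B/A), with minimum value K(s*) = ( (√(A·B) + √(A·B + ε²·C)) / ε² )². -/

import Mathlib

/-- The rational-function minimization underlying Theorem A.4(ii):
`K(s) = (((A s² + B) + √((A s² + B)² + 4 ε² C s²))/(2 ε² s))²` on `(0, ∞)` is
strictly decreasing on `(0, √(B/A)]`, strictly increasing on `[√(B/A), ∞)`, and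
attains its minimum uniquely at `s* = √(B/A)` with value
`((√(AB) + √(AB + ε²C))/ε²)²`. -/
theorem rational_min_geometric_momentum (A B C ε : ℝ)
    (hA : 0 < A) (hB : 0 < B) (hε : 0 < ε) (hC : 0 ≤ C) :
    StrictAntiOn
      (fun s : ℝ => (((A * s ^ 2 + B)
          + Real.sqrt ((A * s ^ 2 + B) ^ 2 + 4 * ε ^ 2 * C * s ^ 2))
        / (2 * ε ^ 2 * s)) ^ 2)
      (Set.Ioc 0 (Real.sqrt (B / A))) ∧
    StrictMonoOn
      (fun s : ℝ => (((A * s ^ 2 + B)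
          + Real.sqrt ((A * s ^ 2 + B) ^ 2 + 4 * ε ^ 2 * C * s ^ 2))
        / (2 * ε ^ 2 * s)) ^ 2)
      (Set.Ici (Real.sqrt (B / A))) ∧
    (((A * Real.sqrt (B / A) ^ 2 + B)
        + Real.sqrt ((A * Real.sqrt (B / A) ^ 2 + B) ^ 2
            + 4 * ε ^ 2 * C * Real.sqrt (B / A) ^ 2))
      / (2 * ε ^ 2 * Real.sqrt (B / A))) ^ 2
      = ((Real.sqrt (A * B) + Real.sqrt (A * B + ε ^ 2 * C)) / ε ^ 2) ^ 2 ∧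
    (∀ s : ℝ, 0 < s → s ≠ Real.sqrt (B / A) →
      ((Real.sqrt (A * B) + Real.sqrt (A * B + ε ^ 2 * C)) / ε ^ 2) ^ 2
        < (((A * s ^ 2 + B)
            + Real.sqrt ((A * s ^ 2 + B) ^ 2 + 4 * ε ^ 2 * C * s ^ 2))
          / (2 * ε ^ 2 * s)) ^ 2) := by
  have hBA : (0:ℝ) < B / A := div_pos hB hA
  have hr : 0 < Real.sqrt (B / A) := Real.sqrt_pos.mpr hBA
  set r := Real.sqrt (B / A) with hrdef
  have hr2 : r ^ 2 = B / A := Real.sq_sqrt hBA.le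
  set c := 4 * ε ^ 2 * C with hcdef
  have hc0 : (0:ℝ) ≤ c := by positivity
  set g : ℝ → ℝ := fun v => ((v + Real.sqrt (v ^ 2 + c)) / (2 * ε ^ 2)) ^ 2 with hgdef
  set u : ℝ → ℝ := fun s => A * s + B / s with hudef
  -- rewrite K in terms of g ∘ u
  have hF : ∀ s : ℝ, 0 < s →
      (((A * s ^ 2 + B) + Real.sqrt ((A * s ^ 2 + B) ^ 2 + 4 * ε ^ 2 * C * s ^ 2))
        / (2 * ε ^ 2 * s)) ^ 2 = g (u s) := by
    intro s hs
    have hsne : s ≠ 0 := hs.ne'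
    have h1 : (A * s ^ 2 + B) ^ 2 + 4 * ε ^ 2 * C * s ^ 2
        = s ^ 2 * ((u s) ^ 2 + c) := by
      simp only [hudef, hcdef]
      field_simp
    rw [h1, Real.sqrt_mul (by positivity) _, Real.sqrt_sq hs.le]
    have h2 : A * s ^ 2 + B = s * u s := by
      simp only [hudef]; field_simp
    rw [h2]
    simp only [hgdef]
    rw [show s * u s + s * Real.sqrt (u s ^ 2 + c) = s * (u s + Real.sqrt (u s ^ 2 + c)) by ring,
      show (2 : ℝ) * ε ^ 2 * s = s * (2 * ε ^ 2) by ring,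
      mul_div_mul_left _ _ hsne]
  -- g strictly monotone on positives
  have hgmono : ∀ v w : ℝ, 0 < v → v < w → g v < g w := by
    intro v w hv hvw
    have hsq : Real.sqrt (v ^ 2 + c) ≤ Real.sqrt (w ^ 2 + c) := by
      apply Real.sqrt_le_sqrt
      nlinarith
    have h1 : v + Real.sqrt (v ^ 2 + c) < w + Real.sqrt (w ^ 2 + c) := by linarith
    have h2 : (0:ℝ) ≤ v + Real.sqrt (v ^ 2 + c) := by positivity
    simp only [hgdef]
    have h3 : (v + Real.sqrt (v ^ 2 + c)) / (2 * ε ^ 2)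
        < (w + Real.sqrt (w ^ 2 + c)) / (2 * ε ^ 2) :=
      (div_lt_div_iff_of_pos_right (by positivity)).mpr h1
    exact pow_lt_pow_left₀ h3 (div_nonneg h2 (by positivity)) (by norm_num)
  have hupos : ∀ s : ℝ, 0 < s → 0 < u s := by
    intro s hs; simp only [hudef]; positivity
  -- u at r equals 2√(AB)
  have hur : u r = 2 * Real.sqrt (A * B) := by
    have hBr : B = A * r ^ 2 := by
      rw [hr2, mul_div_cancel₀ _ hA.ne']
    have h1 : Real.sqrt (A * B) = A * r := by
      rw [hBr, show A * (A * r ^ 2) = (A * r) ^ 2 by ring, Real.sqrt_sq (by positivity)]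
    simp only [hudef]
    rw [h1, hBr]
    field_simp
    try ring
  -- u s > 2√(AB) for s ≠ r
  have hulb : ∀ s : ℝ, 0 < s → s ≠ r → 2 * Real.sqrt (A * B) < u s := by
    intro s hs hne
    have hab : Real.sqrt (A * B) ^ 2 = A * B := Real.sq_sqrt (by positivity)
    have hA2 : Real.sqrt A ^ 2 = A := Real.sq_sqrt hA.le
    have hB2 : Real.sqrt B ^ 2 = B := Real.sq_sqrt hB.le
    have hAB : Real.sqrt A * Real.sqrt B = Real.sqrt (A * B) :=
      (Real.sqrt_mul hA.le B).symm
    have hsA : 0 < Real.sqrt A := Real.sqrt_pos.mpr hA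
    have hne2 : Real.sqrt A * s - Real.sqrt B ≠ 0 := by
      intro h
      apply hne
      have hsv : s = Real.sqrt B / Real.sqrt A := by
        field_simp
        linarith
      rw [hsv, hrdef, Real.sqrt_div hB.le]
    have hq : 0 < (Real.sqrt A * s - Real.sqrt B) ^ 2 :=
      lt_of_le_of_ne (sq_nonneg _) (Ne.symm (pow_ne_zero 2 hne2))
    simp only [hudef]
    rw [show A * s + B / s = (A * s ^ 2 + B) / s by field_simp, lt_div_iff₀ hs]
    nlinarith [hq, hA2, hB2, hAB]
  -- u strictly decreasing on Ioc 0 r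
  have huanti : ∀ s t : ℝ, 0 < s → s < t → t ≤ r → u t < u s := by
    intro s t hs hst htr
    have ht : 0 < t := hs.trans hst
    have hstBA : s * t < B / A := by
      have h1 : s * t < r * t := by nlinarith
      have h2 : r * t ≤ r * r := by nlinarith
      nlinarith [hr2]
    have heq : u s - u t = (t - s) * (B - A * (s * t)) / (s * t) := by
      simp only [hudef]; field_simp; ring
    have hnum : 0 < (t - s) * (B - A * (s * t)) := by
      apply mul_pos (by linarith)
      have : A * (s * t) < A * (B / A) := by exact (mul_lt_mul_iff_right₀ hA).mpr hstBA
      rw [mul_div_cancel₀ _ hA.ne'] at this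
      linarith
    have h3 := div_pos hnum (mul_pos hs ht)
    rw [← heq] at h3
    exact sub_pos.mp h3
  -- u strictly increasing on Ici r
  have humono : ∀ s t : ℝ, r ≤ s → s < t → u s < u t := by
    intro s t hrs hst
    have hs : 0 < s := hr.trans_le hrs
    have ht : 0 < t := hs.trans hst
    have hstBA : B / A < s * t := by
      calc B / A = r * r := by nlinarith [hr2]
      _ ≤ s * s := by apply mul_le_mul hrs hrs hr.le hs.le
      _ < s * t := by exact (mul_lt_mul_iff_right₀ hs).mpr hst
    have heq : u t - u s = (t - s) * (A * (s * t) - B) / (s * t) := by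
      simp only [hudef]; field_simp; ring
    have hnum : 0 < (t - s) * (A * (s * t) - B) := by
      apply mul_pos (by linarith)
      have : A * (B / A) < A * (s * t) := (mul_lt_mul_iff_right₀ hA).mpr hstBA
      rw [mul_div_cancel₀ _ hA.ne'] at this
      linarith
    have h3 := div_pos hnum (mul_pos hs ht)
    rw [← heq] at h3
    exact sub_pos.mp h3
  have hval : g (u r) = ((Real.sqrt (A * B) + Real.sqrt (A * B + ε ^ 2 * C)) / ε ^ 2) ^ 2 := by
    rw [hur]
    simp only [hgdef]
    have h1 : (2 * Real.sqrt (A * B)) ^ 2 + c = 4 * (A * B + ε ^ 2 * C) := by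
      rw [show (2 * Real.sqrt (A * B)) ^ 2 = 4 * Real.sqrt (A * B) ^ 2 by ring,
        Real.sq_sqrt (by positivity)]
      simp only [hcdef]; ring
    have h2 : Real.sqrt (4 * (A * B + ε ^ 2 * C)) = 2 * Real.sqrt (A * B + ε ^ 2 * C) := by
      rw [Real.sqrt_mul (by norm_num : (0:ℝ) ≤ 4) _,
        show Real.sqrt 4 = 2 by
          rw [show (4:ℝ) = 2 ^ 2 by norm_num, Real.sqrt_sq (by norm_num : (0:ℝ) ≤ 2)]]
    rw [h1, h2]
    rw [show 2 * Real.sqrt (A * B) + 2 * Real.sqrt (A * B + ε ^ 2 * C)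
        = 2 * (Real.sqrt (A * B) + Real.sqrt (A * B + ε ^ 2 * C)) by ring,
      show (2 : ℝ) * ε ^ 2 = 2 * ε ^ 2 by ring]
    rw [mul_div_mul_left _ _ (by norm_num : (2:ℝ) ≠ 0)]
  refine ⟨?_, ?_, ?_, ?_⟩
  · intro s hs t ht hst
    simp only
    rw [hF s hs.1, hF t (hs.1.trans hst)]
    exact hgmono (u t) (u s) (hupos t (hs.1.trans hst)) (huanti s t hs.1 hst ht.2)
  · intro s hs t ht hst
    simp only
    rw [hF s (hr.trans_le hs), hF t (hr.trans_le (hs.trans hst.le))]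
    exact hgmono (u s) (u t) (hupos s (hr.trans_le hs)) (humono s t hs hst)
  · rw [hF r hr, hval]
  · intro s hs hne
    rw [hF s hs, ← hval, hur]
    exact hgmono _ _ (by positivity) (hur ▸ hulb s hs hne)
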